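/- Suppose the Fréchet derivative f' is uniformly continuous on C, C is weakly compact, f is uniformly convex with modulus δ, and the stepsizes (γ_k) are chosen either by line minimization or by the open loop rule. Then the minimization problem min_{x∈C} f(x) has a unique solution x*, and the sequence (x_k) generated by the Frank–Wolfe algorithm converges to x* in norm. -/

import Mathlib

open Filter Topology Set

lemma grad_ineq' {X : Type*} [NormedAddCommGroup X] [NormedSpace ℝ X]
    {f : X → ℝ} {f' : X → X →L[ℝ] ℝ}
    (hfconv : ConvexOn ℝ Set.univ f)
    (hfderiv : ∀ x : X, HasFDerivAt f (f' x) x)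
    (x y : X) : f' x (y - x) ≤ f y - f x := by
  set g : ℝ → ℝ := fun t => f (x + t • (y - x)) with hg
  have hline : HasDerivAt (fun t : ℝ => x + t • (y - x)) (y - x) 0 := by
    simpa using ((hasDerivAt_id (0:ℝ)).smul_const (y - x)).const_add x
  have hd : HasDerivAt g (f' x (y - x)) 0 := by
    have := (hfderiv (x + (0:ℝ) • (y - x))).comp_hasDerivAt 0 hline
    simpa [hg, Function.comp_def] using this
  have hslope : Tendsto (slope g 0) (𝓝[>] 0) (𝓝 (f' x (y - x))) :=
    (hasDerivAt_iff_tendsto_slope.1 hd).mono_left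
      (nhdsWithin_mono _ (fun t ht => ne_of_gt ht))
  refine le_of_tendsto hslope ?_
  filter_upwards [Ioc_mem_nhdsGT_of_mem (Set.left_mem_Ico.2 one_pos)] with t ht
  have ht0 : (0:ℝ) < t := ht.1
  have hconv := hfconv.2 (Set.mem_univ y) (Set.mem_univ x) (le_of_lt ht0)
    (by linarith [ht.2] : (0:ℝ) ≤ 1 - t) (by ring)
  have hgt : g t ≤ t * f y + (1 - t) * f x := by
    have : x + t • (y - x) = t • y + (1 - t) • x := by module
    simpa [hg, this] using hconv
  have hg0 : g 0 = f x := by simp [hg]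
  rw [slope_def_field, sub_zero, div_le_iff₀ ht0]
  nlinarith [hgt, hg0]

lemma descent_ineq' {X : Type*} [NormedAddCommGroup X] [NormedSpace ℝ X]
    {f : X → ℝ} {f' : X → X →L[ℝ] ℝ}
    (hfconv : ConvexOn ℝ Set.univ f)
    (hfderiv : ∀ x : X, HasFDerivAt f (f' x) x)
    (u v : X) (t : ℝ) (ht0 : 0 ≤ t) :
    f (u + t • (v - u)) ≤ f u + t * (f' u (v - u)) +
      t * (‖f' (u + t • (v - u)) - f' u‖ * ‖v - u‖) := by
  set w := u + t • (v - u) with hw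
  have hgi : f' w (u - w) ≤ f u - f w := grad_ineq' hfconv hfderiv _ _
  have huw : u - w = -(t • (v - u)) := by rw [hw]; abel
  rw [huw, map_neg, map_smul, smul_eq_mul] at hgi
  have hb : f' w (v - u) - f' u (v - u) ≤ ‖f' w - f' u‖ * ‖v - u‖ := by
    have h1 : (f' w - f' u) (v - u) ≤ ‖f' w - f' u‖ * ‖v - u‖ :=
      le_trans (le_abs_self _) ((f' w - f' u).le_opNorm _)
    simpa using h1
  nlinarith [mul_le_mul_of_nonneg_left hb ht0]

/-- **Norm convergence of Frank–Wolfe iterates under uniform convexity**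
(Theorem 3.3 (ii)). If `C` is weakly compact, `f'` is uniformly continuous on `C`, `f` is
uniformly convex with modulus `δ`, and the stepsizes are chosen by line minimization or
by the open loop rule, then the minimization problem has a unique solution `x*` in `C`
and the Frank–Wolfe iterates converge to `x*` in norm. -/
theorem stmt_6
    {X : Type*} [NormedAddCommGroup X] [NormedSpace ℝ X] [CompleteSpace X]
    (C : Set X) (hCne : C.Nonempty) (hCcl : IsClosed C)
    (hCbd : Bornology.IsBounded C) (hCcv : Convex ℝ C)
    (hCwc : IsCompact (⇑(toWeakSpace ℝ X) '' C))
    (f : X → ℝ) (f' : X → X →L[ℝ] ℝ)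
    (hfconv : ConvexOn ℝ Set.univ f)
    (hfderiv : ∀ x : X, HasFDerivAt f (f' x) x)
    (hfUC : UniformContinuousOn f' C)
    (δ : ℝ → ℝ)
    (hδcont : ContinuousOn δ (Set.Ici 0)) (hδ0 : δ 0 = 0)
    (hδpos : ∀ t > (0 : ℝ), 0 < δ t) (hδnonneg : ∀ t ≥ (0 : ℝ), 0 ≤ δ t)
    (hfUnifConv : ∀ x y : X, ∀ lam : ℝ, 0 < lam → lam < 1 →
      f (lam • x + (1 - lam) • y) ≤
        lam * f x + (1 - lam) * f y - lam * (1 - lam) * δ ‖x - y‖)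
    (xstar : X) (hxstarC : xstar ∈ C) (hxstarmin : ∀ y ∈ C, f xstar ≤ f y)
    (x xbar : ℕ → X) (γ : ℕ → ℝ)
    (hx0 : x 0 ∈ C)
    (hxbarC : ∀ k, xbar k ∈ C)
    (hxbarmin : ∀ k, ∀ y ∈ C, f' (x k) (xbar k) ≤ f' (x k) y)
    (hupdate : ∀ k, x (k + 1) = x k + γ k • (xbar k - x k))
    (hstep :
      ((∀ k, γ k ∈ Set.Icc (0 : ℝ) 1) ∧
        ∀ k, ∀ γ' ∈ Set.Icc (0 : ℝ) 1,
          f (x k + γ k • (xbar k - x k)) ≤ f (x k + γ' • (xbar k - x k)))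
      ∨ ((∀ k, γ k ∈ Set.Ioc (0 : ℝ) 1) ∧ Tendsto γ atTop (𝓝 0) ∧
          Tendsto (fun n => ∑ k ∈ Finset.range n, γ k) atTop atTop)) :
    (∀ z ∈ C, (∀ y ∈ C, f z ≤ f y) → z = xstar) ∧
      Tendsto x atTop (𝓝 xstar) := by
  classical
  -- uniform convexity midpoint consequence
  have hmid : ∀ z ∈ C, δ ‖z - xstar‖ ≤ 2 * (f z - f xstar) := by
    intro z hz
    have hmem : (1/2 : ℝ) • z + (1 - 1/2 : ℝ) • xstar ∈ C :=
      hCcv hz hxstarC (by norm_num) (by norm_num) (by norm_num)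
    have h1 := hfUnifConv z xstar (1/2) (by norm_num) (by norm_num)
    have h2 := hxstarmin _ hmem
    nlinarith [h1, h2]
  have huniq : ∀ z ∈ C, (∀ y ∈ C, f z ≤ f y) → z = xstar := by
    intro z hz hzmin
    by_contra hne
    have hpos : 0 < ‖z - xstar‖ := by
      rw [norm_pos_iff]; exact sub_ne_zero.2 hne
    have := hmid z hz
    have h1 := hzmin xstar hxstarC
    have h2 := hδpos _ hpos
    linarith
  refine ⟨huniq, ?_⟩
  -- diameter bound
  obtain ⟨D0, hD0⟩ := Metric.isBounded_iff.1 hCbd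
  set D := max D0 0 with hDdef
  have hDnonneg : (0:ℝ) ≤ D := le_max_right _ _
  have hDbound : ∀ u ∈ C, ∀ v ∈ C, ‖u - v‖ ≤ D := by
    intro u hu v hv
    have := hD0 hu hv; rw [dist_eq_norm] at this
    exact this.trans (le_max_left _ _)
  have hγ01 : ∀ k, 0 ≤ γ k ∧ γ k ≤ 1 := by
    rcases hstep with ⟨h1, _⟩ | ⟨h1, _⟩
    · exact fun k => ⟨(h1 k).1, (h1 k).2⟩
    · exact fun k => ⟨le_of_lt (h1 k).1, (h1 k).2⟩
  have hcomb : ∀ (u v : X) (t : ℝ), u ∈ C → v ∈ C → 0 ≤ t → t ≤ 1 →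
      u + t • (v - u) ∈ C := by
    intro u v t hu hv ht0 ht1
    have he : u + t • (v - u) = (1 - t) • u + t • v := by module
    rw [he]; exact hCcv hu hv (by linarith) ht0 (by ring)
  have hxC : ∀ k, x k ∈ C := by
    intro k; induction k with
    | zero => exact hx0
    | succ n ih =>
        rw [hupdate n]; exact hcomb _ _ _ ih (hxbarC n) (hγ01 n).1 (hγ01 n).2
  obtain ⟨h, hhdef⟩ : ∃ h : ℕ → ℝ, ∀ k, h k = f (x k) - f xstar :=
    ⟨_, fun _ => rfl⟩
  have hhnonneg : ∀ k, 0 ≤ h k := fun k => by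
    rw [hhdef]; exact sub_nonneg.2 (hxstarmin _ (hxC k))
  have hgap : ∀ k, f' (x k) (xbar k - x k) ≤ -(h k) := by
    intro k
    have h1 : f' (x k) (xbar k) ≤ f' (x k) xstar := hxbarmin k xstar hxstarC
    have h2 : f' (x k) (xstar - x k) ≤ f xstar - f (x k) :=
      grad_ineq' hfconv hfderiv _ _
    rw [map_sub] at h2 ⊢
    rw [hhdef]; linarith
  -- step estimate
  have hstepEst : ∀ ε > 0, ∃ η > 0, ∀ k, ∀ t : ℝ, 0 ≤ t → t ≤ 1 → t * (D + 1) < η →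
      f (x k + t • (xbar k - x k)) - f xstar ≤ (1 - t) * h k + t * (ε / 2) := by
    intro ε hε
    obtain ⟨η, hη, hmod⟩ := Metric.uniformContinuousOn_iff.1 hfUC
      (ε / (2 * (D + 1))) (by positivity)
    refine ⟨η, hη, ?_⟩
    intro k t ht0 ht1 htη
    have hwC : x k + t • (xbar k - x k) ∈ C :=
      hcomb _ _ _ (hxC k) (hxbarC k) ht0 ht1
    have hdn : ‖xbar k - x k‖ ≤ D := hDbound _ (hxbarC k) _ (hxC k)
    have hdist : dist (x k + t • (xbar k - x k)) (x k) < η := by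
      rw [dist_eq_norm]
      have he : x k + t • (xbar k - x k) - x k = t • (xbar k - x k) := by abel
      rw [he, norm_smul, Real.norm_eq_abs, abs_of_nonneg ht0]
      nlinarith
    have hfdiff : ‖f' (x k + t • (xbar k - x k)) - f' (x k)‖ < ε / (2 * (D + 1)) := by
      have := hmod _ hwC _ (hxC k) hdist
      rwa [dist_eq_norm] at this
    have hεD : ε / (2 * (D + 1)) * D ≤ ε / 2 := by
      rw [div_mul_eq_mul_div, div_le_div_iff₀ (by positivity) (by norm_num)]
      nlinarith
    have hNd : ‖f' (x k + t • (xbar k - x k)) - f' (x k)‖ * ‖xbar k - x k‖ ≤ ε / 2 :=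
      le_trans (mul_le_mul hfdiff.le hdn (norm_nonneg _) (by positivity)) hεD
    have hcore := descent_ineq' hfconv hfderiv (x k) (xbar k) t ht0
    have hgk := hgap k
    rw [hhdef k] at hgk
    rw [hhdef k]
    nlinarith [mul_le_mul_of_nonneg_left hNd ht0, mul_le_mul_of_nonneg_left hgk ht0]
  -- value convergence
  have main : ∀ ε > 0, ∃ N, ∀ k ≥ N, h k ≤ ε := by
    intro ε hε
    obtain ⟨η, hη, hEst⟩ := hstepEst ε hε
    rcases hstep with ⟨hγIcc, hlm⟩ | ⟨hγIoc, hγ0, hγsum⟩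
    · -- line minimization
      set tb : ℝ := min 1 (η / (2 * (D + 1))) with htb
      have htb0 : 0 < tb := lt_min one_pos (by positivity)
      have htb1 : tb ≤ 1 := min_le_left _ _
      have htbη : tb * (D + 1) < η := by
        have h1 : tb ≤ η / (2 * (D + 1)) := min_le_right _ _
        have h2 : η / (2 * (D + 1)) * (D + 1) = η / 2 := by
          field_simp
        nlinarith
      have hdec : ∀ k, h (k + 1) ≤ (1 - tb) * h k + tb * (ε / 2) := by
        intro k
        have h1 : f (x (k+1)) ≤ f (x k + tb • (xbar k - x k)) := by
          rw [hupdate k]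
          exact hlm k tb ⟨le_of_lt htb0, htb1⟩
        have h2 := hEst k tb (le_of_lt htb0) htb1 htbη
        rw [hhdef (k+1)]
        linarith
      have hmono : ∀ k, h (k + 1) ≤ h k := by
        intro k
        have h1 : f (x (k+1)) ≤ f (x k + (0:ℝ) • (xbar k - x k)) := by
          rw [hupdate k]
          exact hlm k 0 ⟨le_refl _, by norm_num⟩
        rw [hhdef, hhdef k]
        simp only [zero_smul, add_zero] at h1
        linarith
      -- find N with h N ≤ ε
      have hexN : ∃ N, h N ≤ ε := by
        by_contra hcon
        push_neg at hcon
        have hstepdown : ∀ k, h (k + 1) ≤ h k - tb * (ε / 2) := by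
          intro k
          have h1 := hdec k
          have h2 := le_of_lt (hcon k)
          nlinarith [mul_le_mul_of_nonneg_left h2 (le_of_lt htb0)]
        have hind : ∀ n : ℕ, h n ≤ h 0 - n * (tb * (ε / 2)) := by
          intro n; induction n with
          | zero => simp
          | succ m ih =>
              have := hstepdown m
              push_cast
              push_cast at ih
              linarith
        obtain ⟨n, hn⟩ := exists_nat_gt (h 0 / (tb * (ε / 2)))
        have hc : 0 < tb * (ε / 2) := by positivity
        have := hind n
        have hn' : h 0 < n * (tb * (ε / 2)) := by
          rw [div_lt_iff₀ hc] at hn; linarith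
        have := hhnonneg n
        linarith
      obtain ⟨N, hN⟩ := hexN
      refine ⟨N, ?_⟩
      intro k hk
      induction k, hk using Nat.le_induction with
      | base => exact hN
      | succ m hm ih => exact le_trans (hmono m) ih
    · -- open loop
      have hγsmall : ∀ᶠ k in atTop, γ k * (D + 1) < η := by
        have : ∀ᶠ k in atTop, γ k < η / (D + 1) :=
          (hγ0.eventually (eventually_lt_nhds (by positivity : (0:ℝ) < η / (D+1))))
        filter_upwards [this] with k hk
        have h1 : γ k * (D + 1) < η / (D + 1) * (D + 1) := by
          have := (hγIoc k).1
          nlinarith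
        have h2 : η / (D + 1) * (D + 1) = η := by field_simp
        linarith
      obtain ⟨K1, hK1⟩ := eventually_atTop.1 hγsmall
      have hdec : ∀ k ≥ K1, h (k + 1) ≤ (1 - γ k) * h k + γ k * (ε / 2) := by
        intro k hk
        have h2 := hEst k (γ k) (le_of_lt (hγIoc k).1) (hγIoc k).2 (hK1 k hk)
        rw [← hupdate k] at h2
        rw [hhdef, hhdef k] at *
        exact h2
      -- sub-claim A : exists k0 ≥ K1 with h k0 ≤ ε
      have hexk0 : ∃ k0, K1 ≤ k0 ∧ h k0 ≤ ε := by
        by_contra hcon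
        push_neg at hcon
        have hstepdown : ∀ k ≥ K1, h (k + 1) ≤ h k - γ k * (ε / 2) := by
          intro k hk
          have h1 := hdec k hk
          have h2 := le_of_lt (hcon k hk)
          have h3 := (hγIoc k).1
          nlinarith [mul_le_mul_of_nonneg_left h2 (le_of_lt h3)]
        obtain ⟨S, hS, hγsum'⟩ : ∃ S : ℕ → ℝ, (∀ n, S n = ∑ j ∈ Finset.range n, γ j)
            ∧ Tendsto S atTop atTop := ⟨_, fun _ => rfl, hγsum⟩
        have hind : ∀ n : ℕ, h (n + K1) ≤ h K1 - (ε / 2) * (S (n + K1) - S K1) := by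
          intro n; induction n with
          | zero => simp
          | succ m ih =>
              have h1 := hstepdown (m + K1) (Nat.le_add_left _ _)
              have e : m + 1 + K1 = (m + K1) + 1 := by omega
              rw [e]
              have h2 : S ((m + K1) + 1) = S (m + K1) + γ (m + K1) := by
                rw [hS, hS, Finset.sum_range_succ]
              rw [h2]
              linarith
        have hdiv : Tendsto (fun n => S (n + K1)) atTop atTop :=
          hγsum'.comp (tendsto_add_atTop_nat K1)
        obtain ⟨n, hn⟩ := (hdiv.eventually_gt_atTop (S K1 + 2 * h K1 / ε)).exists
        have h1 := hind n
        have h2 := hhnonneg (n + K1)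
        have h3 : h K1 < (ε / 2) * (S (n + K1) - S K1) := by
          have hq : 2 * h K1 / ε < S (n + K1) - S K1 := by
            have hn' : S K1 + 2 * h K1 / ε < S (n + K1) := hn
            linarith
          calc h K1 = (ε / 2) * (2 * h K1 / ε) := by field_simp
            _ < (ε / 2) * (S (n + K1) - S K1) := by
                apply mul_lt_mul_of_pos_left hq (by positivity)
        linarith
      obtain ⟨k0, hk0K1, hk0⟩ := hexk0
      refine ⟨k0, ?_⟩
      intro k hk
      induction k, hk using Nat.le_induction with
      | base => exact hk0
      | succ m hm ih =>
          have h1 := hdec m (le_trans hk0K1 hm)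
          have h2 := (hγIoc m).1
          have h3 := (hγIoc m).2
          nlinarith [mul_le_mul_of_nonneg_left ih (le_of_lt h2)]
  -- norm convergence
  rw [Metric.tendsto_atTop]
  intro ε hε
  have hnormD : ∀ k, ‖x k - xstar‖ ≤ D := fun k => hDbound _ (hxC k) _ hxstarC
  rcases lt_or_ge D ε with hcase | hcase
  · exact ⟨0, fun k _ => by rw [dist_eq_norm]; exact lt_of_le_of_lt (hnormD k) hcase⟩
  · -- ε ≤ D : use minimum of δ on [ε, D]
    have hIcc : (Set.Icc ε D).Nonempty := ⟨ε, le_refl _, hcase⟩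
    have hsub : Set.Icc ε D ⊆ Set.Ici 0 := fun t ht => le_trans (le_of_lt hε) ht.1
    obtain ⟨t0, ht0mem, ht0min⟩ :=
      isCompact_Icc.exists_isMinOn hIcc (hδcont.mono hsub)
    have hm : 0 < δ t0 := hδpos t0 (lt_of_lt_of_le hε ht0mem.1)
    obtain ⟨N, hN⟩ := main (δ t0 / 3) (by positivity)
    refine ⟨N, ?_⟩
    intro k hk
    rw [dist_eq_norm]
    by_contra hcon
    push_neg at hcon
    have hmem : ‖x k - xstar‖ ∈ Set.Icc ε D := ⟨hcon, hnormD k⟩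
    have h1 : δ t0 ≤ δ ‖x k - xstar‖ := ht0min hmem
    have h2 := hmid (x k) (hxC k)
    have h3 := hN k hk
    rw [hhdef] at h3
    linarith
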